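/- The logics EQ_1 and EQ_2 have the uniform interpolation property; for every n ≥ 3, the logic EQ_n does not have the Craig interpolation property; and for every n ≥ 1, the logic LO_n has the uniform interpolation property. -/

import Mathlib

inductive MForm (α : Type) : Type
  | top : MForm α
  | atom : α → MForm α
  | neg : MForm α → MForm α
  | and : MForm α → MForm α → MForm α
  | box : MForm α → MForm α
deriving DecidableEq

namespace MForm

def imp {α : Type} (φ ψ : MForm α) : MForm α := neg (and φ (neg ψ))

def dia {α : Type} (φ : MForm α) : MForm α := neg (box (neg φ))

def sig {α : Type} [DecidableEq α] : MForm α → Finset α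
  | top => ∅
  | atom p => {p}
  | neg φ => sig φ
  | and φ ψ => sig φ ∪ sig ψ
  | box φ => sig φ

def IsProp {α : Type} : MForm α → Prop
  | top => True
  | atom _ => True
  | neg φ => IsProp φ
  | and φ ψ => IsProp φ ∧ IsProp ψ
  | box _ => False

def subf {α : Type} [DecidableEq α] : MForm α → Finset (MForm α)
  | top => {top}
  | atom p => {atom p}
  | neg φ => insert (neg φ) (subf φ)
  | and φ ψ => insert (and φ ψ) (subf φ ∪ subf ψ)
  | box φ => insert (box φ) (subf φ)

/-- The dag-size of a formula: the number of its distinct subformulas. -/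
def dagSize {α : Type} [DecidableEq α] (φ : MForm α) : ℕ := (subf φ).card

end MForm

def psat {α : Type} (v : α → Prop) : MForm α → Prop
  | .top => True
  | .atom p => v p
  | .neg φ => ¬ psat v φ
  | .and φ ψ => psat v φ ∧ psat v ψ
  | .box _ => True

/-- Propositional tautology. -/
def PTaut {α : Type} (φ : MForm α) : Prop := ∀ v : α → Prop, psat v φ

def bigAnd {α : Type} : List (MForm α) → MForm α
  | [] => .top
  | φ :: l => .and φ (bigAnd l)

def bigOr {α : Type} (l : List (MForm α)) : MForm α := .neg (bigAnd (l.map .neg))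

def boxIter {α : Type} : ℕ → MForm α → MForm α
  | 0, φ => φ
  | n + 1, φ => .box (boxIter n φ)

def diaIter {α : Type} : ℕ → MForm α → MForm α
  | 0, φ => φ
  | n + 1, φ => MForm.dia (diaIter n φ)

/-- `□^{≤n} φ`. -/
def ble {α : Type} (n : ℕ) (φ : MForm α) : MForm α :=
  bigAnd ((List.range (n + 1)).map (fun k => boxIter k φ))

/-- `◇^{≤n} φ`. -/
def dle {α : Type} (n : ℕ) (φ : MForm α) : MForm α := .neg (ble n (.neg φ))

def substAtoms {α β : Type} (s : α → MForm β) : MForm α → MForm β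
  | .top => .top
  | .atom a => s a
  | .neg φ => .neg (substAtoms s φ)
  | .and φ ψ => .and (substAtoms s φ) (substAtoms s ψ)
  | .box φ => .box (substAtoms s φ)

structure Frame where
  W : Type
  ne : Nonempty W
  R : W → W → Prop

structure PFrame extends Frame where
  pt : W

def sat (F : Frame) (V : F.W → ℕ → Prop) : F.W → MForm ℕ → Prop
  | w, .top => True
  | w, .atom p => V w p
  | w, .neg φ => ¬ sat F V w φ
  | w, .and φ ψ => sat F V w φ ∧ sat F V w ψ
  | w, .box φ => ∀ v, F.R w v → sat F V v φ

def validAt (F : Frame) (w : F.W) (φ : MForm ℕ) : Prop := ∀ V, sat F V w φ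

def Log (𝓕 : Set PFrame) : Set (MForm ℕ) := {φ | ∀ P ∈ 𝓕, validAt P.toFrame P.pt φ}

def Rooted (F : Frame) (w : F.W) : Prop := ∀ v, Relation.ReflTransGen F.R w v

def StrImp (L : Set (MForm ℕ)) (σ : Finset ℕ) (φ χ : MForm ℕ) : Prop :=
  χ.sig ⊆ σ ∧ φ.imp χ ∈ L ∧
    ∀ ψ : MForm ℕ, ψ.sig ⊆ σ → φ.imp ψ ∈ L → χ.imp ψ ∈ L

def UnifInt (L : Set (MForm ℕ)) (σ : Finset ℕ) (φ χ : MForm ℕ) : Prop :=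
  χ.sig ⊆ σ ∧ φ.imp χ ∈ L ∧
    ∀ ψ : MForm ℕ, ψ.sig ∩ φ.sig ⊆ σ → φ.imp ψ ∈ L → χ.imp ψ ∈ L

def CraigInt (L : Set (MForm ℕ)) (φ ψ χ : MForm ℕ) : Prop :=
  φ.imp χ ∈ L ∧ χ.imp ψ ∈ L ∧ χ.sig ⊆ φ.sig ∩ ψ.sig

def HasCIP (L : Set (MForm ℕ)) : Prop :=
  ∀ φ ψ : MForm ℕ, φ.imp ψ ∈ L → ∃ χ, CraigInt L φ ψ χ

def IsBisim (σ : Finset ℕ) (F₁ : Frame) (V₁ : F₁.W → ℕ → Prop)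
    (F₂ : Frame) (V₂ : F₂.W → ℕ → Prop) (Z : F₁.W → F₂.W → Prop) : Prop :=
  (∀ w₁ w₂, Z w₁ w₂ → ∀ p ∈ σ, (V₁ w₁ p ↔ V₂ w₂ p)) ∧
  (∀ w₁ w₂ v₁, Z w₁ w₂ → F₁.R w₁ v₁ → ∃ v₂, F₂.R w₂ v₂ ∧ Z v₁ v₂) ∧
  (∀ w₁ w₂ v₂, Z w₁ w₂ → F₂.R w₂ v₂ → ∃ v₁, F₁.R w₁ v₁ ∧ Z v₁ v₂)

def Bisim (σ : Finset ℕ) (F₁ : Frame) (V₁ : F₁.W → ℕ → Prop) (w₁ : F₁.W)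
    (F₂ : Frame) (V₂ : F₂.W → ℕ → Prop) (w₂ : F₂.W) : Prop :=
  ∃ Z, IsBisim σ F₁ V₁ F₂ V₂ Z ∧ Z w₁ w₂

def IsEME (σ : Finset ℕ) (Φ : Finset (MForm ℕ)) : Prop :=
  (∀ φ ∈ Φ, φ.IsProp ∧ φ.sig ⊆ σ) ∧
  (∀ v : ℕ → Prop, ∃ φ ∈ Φ, psat v φ) ∧
  (∀ φ ∈ Φ, ∀ ψ ∈ Φ, φ ≠ ψ → ∀ v : ℕ → Prop, ¬ (psat v φ ∧ psat v ψ))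

def IsCover (σ : Finset ℕ) (Φ : Finset (MForm ℕ)) (F : Frame) (V : F.W → ℕ → Prop) : Prop :=
  ∀ φ ∈ Φ, ∀ w₁ w₂, sat F V w₁ φ → sat F V w₂ φ →
    ∀ χ : MForm ℕ, χ.IsProp → χ.sig ⊆ σ → (sat F V w₁ χ ↔ sat F V w₂ χ)

noncomputable def coverFml (σ : Finset ℕ) (Φ : Finset (MForm ℕ)) (N : ℕ) : MForm ℕ :=
  bigAnd (Φ.toList.map (fun φ => bigAnd (σ.toList.map (fun p =>
    MForm.imp (dle N (.and φ (.atom p))) (ble N (MForm.imp φ (.atom p)))))))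

/-- EQ_n: the logic of all pointed frames whose relation is an equivalence relation and
which have at most `n` worlds. -/
def EQlog (n : ℕ) : Set (MForm ℕ) :=
  {φ | ∀ F : Frame, Equivalence F.R → Finite F.W → Nat.card F.W ≤ n →
    ∀ w : F.W, validAt F w φ}

/-- LO_n: the logic of all rooted pointed frames that are finite strict linear orders with
at most `n` worlds, pointed at the minimum (from which all worlds are reachable). -/
def LOlog (n : ℕ) : Set (MForm ℕ) :=
  {φ | ∀ F : Frame, Irreflexive F.R → Transitive F.R →
    (∀ a b : F.W, a ≠ b → F.R a b ∨ F.R b a) →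
    Finite F.W → Nat.card F.W ≤ n →
    ∀ w : F.W, (∀ v : F.W, v ≠ w → F.R w v) → validAt F w φ}

/-- The uniform interpolation property. -/
def HasUIP (L : Set (MForm ℕ)) : Prop :=
  ∀ φ : MForm ℕ, ∀ σ ⊆ φ.sig, ∃ χ, UnifInt L σ φ χ

/- ====================== Auxiliary development ====================== -/

open Classical

section Aux

/-- satisfaction unfolding lemmas -/
lemma sat_top {F V w} : sat F V w .top := trivial
lemma sat_atom {F V w p} : sat F V w (.atom p) ↔ V w p := Iff.rfl
lemma sat_neg {F V w} {φ : MForm ℕ} : sat F V w (.neg φ) ↔ ¬ sat F V w φ := Iff.rfl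
lemma sat_and {F V w} {φ ψ : MForm ℕ} :
    sat F V w (.and φ ψ) ↔ sat F V w φ ∧ sat F V w ψ := Iff.rfl
lemma sat_box {F V w} {φ : MForm ℕ} :
    sat F V w (.box φ) ↔ ∀ v, F.R w v → sat F V v φ := Iff.rfl

lemma sat_imp {F V w} {φ ψ : MForm ℕ} :
    sat F V w (φ.imp ψ) ↔ (sat F V w φ → sat F V w ψ) := by
  simp only [MForm.imp, sat_neg, sat_and]
  tauto

lemma sat_dia {F V w} {φ : MForm ℕ} :
    sat F V w (φ.dia) ↔ ∃ v, F.R w v ∧ sat F V v φ := by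
  simp only [MForm.dia, sat_neg, sat_box]
  push_neg
  rfl

lemma sat_bigAnd {F V w} {l : List (MForm ℕ)} :
    sat F V w (bigAnd l) ↔ ∀ φ ∈ l, sat F V w φ := by
  induction l with
  | nil => simpa [bigAnd] using sat_top
  | cons a l ih => simp [bigAnd, sat_and, ih]

lemma sat_bigOr {F V w} {l : List (MForm ℕ)} :
    sat F V w (bigOr l) ↔ ∃ φ ∈ l, sat F V w φ := by
  simp only [bigOr, sat_neg, sat_bigAnd]
  push_neg
  constructor
  · rintro ⟨ψ, hm, hs⟩
    simp only [List.mem_map] at hm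
    obtain ⟨φ, hφ, rfl⟩ := hm
    exact ⟨φ, hφ, not_not.mp hs⟩
  · rintro ⟨φ, hφ, hs⟩
    exact ⟨.neg φ, List.mem_map.mpr ⟨φ, hφ, rfl⟩, fun h => h hs⟩

lemma sig_bigAnd_subset {s : Finset ℕ} {l : List (MForm ℕ)}
    (h : ∀ φ ∈ l, MForm.sig φ ⊆ s) : (bigAnd l).sig ⊆ s := by
  induction l with
  | nil => simp [bigAnd, MForm.sig]
  | cons a l ih =>
      simp only [bigAnd, MForm.sig, Finset.union_subset_iff]
      exact ⟨h a (by simp), ih (fun φ hφ => h φ (by simp [hφ]))⟩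

lemma sig_bigOr_subset {s : Finset ℕ} {l : List (MForm ℕ)}
    (h : ∀ φ ∈ l, MForm.sig φ ⊆ s) : (bigOr l).sig ⊆ s := by
  simp only [bigOr, MForm.sig]
  refine sig_bigAnd_subset ?_
  intro φ hφ
  simp only [List.mem_map] at hφ
  obtain ⟨ψ, hψ, rfl⟩ := hφ
  exact h ψ hψ

lemma sig_diaIter {j : ℕ} {φ : MForm ℕ} : (diaIter j φ).sig = φ.sig := by
  induction j with
  | zero => rfl
  | succ j ih => simpa [diaIter, MForm.dia, MForm.sig] using ih

/-- The master bisimulation-invariance lemma. -/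
lemma sat_of_bisim {F₁ F₂ : Frame} {V₁ : F₁.W → ℕ → Prop} {V₂ : F₂.W → ℕ → Prop}
    (τ : Finset ℕ) (Z : F₁.W → F₂.W → Prop)
    (hatom : ∀ w₁ w₂, Z w₁ w₂ → ∀ p ∈ τ, (V₁ w₁ p ↔ V₂ w₂ p))
    (hforth : ∀ w₁ w₂ v₁, Z w₁ w₂ → F₁.R w₁ v₁ → ∃ v₂, F₂.R w₂ v₂ ∧ Z v₁ v₂)
    (hback : ∀ w₁ w₂ v₂, Z w₁ w₂ → F₂.R w₂ v₂ → ∃ v₁, F₁.R w₁ v₁ ∧ Z v₁ v₂) :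
    ∀ θ : MForm ℕ, θ.sig ⊆ τ → ∀ w₁ w₂, Z w₁ w₂ →
      (sat F₁ V₁ w₁ θ ↔ sat F₂ V₂ w₂ θ) := by
  intro θ
  induction θ with
  | top => intro _ _ _ _; simp [sat]
  | atom p =>
      intro hsig w₁ w₂ hZ
      exact hatom w₁ w₂ hZ p (hsig (by simp [MForm.sig]))
  | neg φ ih =>
      intro hsig w₁ w₂ hZ
      simpa [sat_neg] using not_congr (ih hsig w₁ w₂ hZ)
  | and φ ψ ihφ ihψ =>
      intro hsig w₁ w₂ hZ
      simp only [MForm.sig, Finset.union_subset_iff] at hsig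
      exact and_congr (ihφ hsig.1 w₁ w₂ hZ) (ihψ hsig.2 w₁ w₂ hZ)
  | box φ ih =>
      intro hsig w₁ w₂ hZ
      simp only [sat_box]
      constructor
      · intro h v₂ hR
        obtain ⟨v₁, hR₁, hZ'⟩ := hback w₁ w₂ v₂ hZ hR
        exact (ih hsig v₁ v₂ hZ').mp (h v₁ hR₁)
      · intro h v₁ hR
        obtain ⟨v₂, hR₂, hZ'⟩ := hforth w₁ w₂ v₁ hZ hR
        exact (ih hsig v₁ v₂ hZ').mpr (h v₂ hR₂)

/-- literal conjunction describing that exactly the atoms in `A` among `σ` hold -/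
def agreeV (σ : Finset ℕ) (v : ℕ → Prop) (A : Finset ℕ) : Prop := ∀ p ∈ σ, v p ↔ p ∈ A

noncomputable def litF (σ A : Finset ℕ) : MForm ℕ :=
  bigAnd (σ.toList.map (fun p => if p ∈ A then .atom p else .neg (.atom p)))

lemma sig_litF {σ A : Finset ℕ} : (litF σ A).sig ⊆ σ := by
  refine sig_bigAnd_subset ?_
  intro φ hφ
  simp only [List.mem_map, Finset.mem_toList] at hφ
  obtain ⟨p, hp, rfl⟩ := hφ
  split <;> simp [MForm.sig, Finset.singleton_subset_iff, hp]

lemma sat_litF {F V w} {σ A : Finset ℕ} :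
    sat F V w (litF σ A) ↔ agreeV σ (V w) A := by
  simp only [litF, sat_bigAnd, agreeV, List.mem_map, Finset.mem_toList]
  constructor
  · intro h p hp
    have := h _ ⟨p, hp, rfl⟩
    by_cases hA : p ∈ A <;> simp only [hA, if_true, if_false] at this <;>
      simp [hA, sat_atom, sat_neg] at this ⊢ <;> tauto
  · rintro h φ ⟨p, hp, rfl⟩
    have := h p hp
    by_cases hA : p ∈ A <;> simp [hA, sat_atom, sat_neg] <;> tauto

lemma agreeV_unique {σ A B : Finset ℕ} {v : ℕ → Prop} (hA : A ⊆ σ) (hB : B ⊆ σ)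
    (h1 : agreeV σ v A) (h2 : agreeV σ v B) : A = B := by
  ext p
  constructor
  · intro hp
    exact (h2 p (hA hp)).mp ((h1 p (hA hp)).mpr hp)
  · intro hp
    exact (h1 p (hB hp)).mp ((h2 p (hB hp)).mpr hp)

/-- disjunction -/
def morF (a b : MForm ℕ) : MForm ℕ := .neg (.and (.neg a) (.neg b))

lemma sat_morF {F V w} {a b : MForm ℕ} :
    sat F V w (morF a b) ↔ sat F V w a ∨ sat F V w b := by
  simp only [morF, sat_neg, sat_and]; tauto

lemma sig_morF {a b : MForm ℕ} : (morF a b).sig = a.sig ∪ b.sig := rfl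

end Aux
section Canon

/-- canonical cluster frame -/
abbrev cfF (m : ℕ) : Frame := ⟨Fin (m+1), ⟨0⟩, fun _ _ => True⟩

/-- canonical linear frame -/
abbrev loF (m : ℕ) : Frame := ⟨Fin (m+1), ⟨0⟩, fun a b => a < b⟩

/-- Reduction of a pointed model over an equivalence frame to a canonical cluster model. -/
lemma eq_canon {F : Frame} (hE : Equivalence F.R) (hf : Finite F.W)
    (w : F.W) (V : F.W → ℕ → Prop) :
    ∃ m : ℕ, m + 1 ≤ Nat.card F.W ∧ ∃ V' : Fin (m+1) → ℕ → Prop,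
      ∀ θ : MForm ℕ, sat F V w θ ↔ sat (cfF m) V' ((0 : Fin (m+1)) : (cfF m).W) θ := by
  classical
  haveI : Finite F.W := hf
  set C := {v : F.W // F.R w v} with hC
  haveI : Finite C := Subtype.finite
  have hwC : F.R w w := hE.refl w
  haveI : Nonempty C := ⟨⟨w, hwC⟩⟩
  have hpos : 0 < Nat.card C := Nat.card_pos
  obtain ⟨m, hm⟩ : ∃ m, Nat.card C = m + 1 := ⟨Nat.card C - 1, by omega⟩
  have e0 : C ≃ Fin (m+1) := Finite.equivFinOfCardEq hm
  set e : C ≃ Fin (m+1) := e0.trans (Equiv.swap (e0 ⟨w, hwC⟩) 0) with he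
  have hew : e ⟨w, hwC⟩ = 0 := by
    simp [he, Equiv.trans_apply, Equiv.swap_apply_left]
  refine ⟨m, ?_, fun i p => V (e.symm i).1 p, ?_⟩
  · calc m + 1 = Nat.card C := hm.symm
      _ ≤ Nat.card F.W := Nat.card_le_card_of_injective _ Subtype.val_injective
  · intro θ
    have hclus : ∀ u u' : F.W, F.R w u → F.R w u' → F.R u u' := by
      intro u u' h1 h2
      exact hE.trans (hE.symm h1) h2
    refine sat_of_bisim (F₁ := F) (F₂ := cfF m) θ.sig
      (fun u i => ∃ h : F.R w u, e ⟨u, h⟩ = i) ?_ ?_ ?_ θ (le_refl _) w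
      ((0 : Fin (m+1)) : (cfF m).W) ⟨hwC, hew⟩
    · rintro u i ⟨h, rfl⟩ p _
      simp [Equiv.symm_apply_apply]
    · rintro u i v ⟨h, rfl⟩ hR
      have hv : F.R w v := hE.trans h hR
      exact ⟨e ⟨v, hv⟩, trivial, hv, rfl⟩
    · rintro u i j ⟨h, rfl⟩ _
      refine ⟨(e.symm j).1, hclus _ _ h (e.symm j).2, (e.symm j).2, ?_⟩
      simp

lemma sto_of_linOrd {α : Type} (R : α → α → Prop) (hIrr : Irreflexive R)
    (hTrans : Transitive R) (hTot : ∀ a b : α, a ≠ b → R a b ∨ R b a) :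
    IsStrictTotalOrder α R where
  trichotomous := by
    intro a b h1 h2
    by_contra h
    rcases hTot a b h with h' | h'
    · exact h1 h'
    · exact h2 h'
  irrefl := hIrr
  trans := hTrans

/-- Reduction of a pointed model over a rooted finite strict linear order to the canonical
linear model. -/
lemma lo_canon {F : Frame} (hIrr : Irreflexive F.R) (hTrans : Transitive F.R)
    (hTot : ∀ a b : F.W, a ≠ b → F.R a b ∨ F.R b a) (hf : Finite F.W)
    (w : F.W) (hroot : ∀ v : F.W, v ≠ w → F.R w v) (V : F.W → ℕ → Prop) :
    ∃ m : ℕ, m + 1 = Nat.card F.W ∧ ∃ V' : Fin (m+1) → ℕ → Prop,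
      ∀ θ : MForm ℕ, sat F V w θ ↔ sat (loF m) V' ((0 : Fin (m+1)) : (loF m).W) θ := by
  classical
  haveI : Finite F.W := hf
  haveI : Fintype F.W := Fintype.ofFinite _
  haveI hSTO : IsStrictTotalOrder F.W F.R := sto_of_linOrd F.R hIrr hTrans hTot
  letI : LinearOrder F.W := linearOrderOfSTO F.R
  have hlt : ∀ a b : F.W, a < b ↔ F.R a b := fun a b => Iff.rfl
  haveI : Nonempty F.W := F.ne
  have hpos : 0 < Fintype.card F.W := Fintype.card_pos
  obtain ⟨m, hm⟩ : ∃ m, Fintype.card F.W = m + 1 := ⟨Fintype.card F.W - 1, by omega⟩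
  have e : Fin (m+1) ≃o F.W := monoEquivOfFin F.W hm
  have hew : e 0 = w := by
    have h1 : e 0 ≤ w :=
      calc e 0 ≤ e (e.symm w) := e.monotone (Fin.zero_le _)
        _ = w := e.apply_symm_apply w
    have h2 : w ≤ e 0 := by
      by_cases h : e 0 = w
      · exact le_of_eq h.symm
      · exact le_of_lt ((hlt w (e 0)).mpr (hroot _ h))
    exact le_antisymm h1 h2
  refine ⟨m, by rw [Nat.card_eq_fintype_card, hm], fun i p => V (e i) p, ?_⟩
  intro θ
  refine sat_of_bisim (F₁ := F) (F₂ := loF m) θ.sig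
    (fun u i => e i = u) ?_ ?_ ?_ θ (le_refl _) w ((0 : Fin (m+1)) : (loF m).W) hew
  · rintro u i rfl p _
    exact Iff.rfl
  · rintro u i v rfl hR
    refine ⟨e.symm v, ?_, e.apply_symm_apply v⟩
    have h2 : e.symm (e i) < e.symm v := e.symm.strictMono ((hlt (e i) v).mpr hR)
    rw [e.symm_apply_apply] at h2
    exact h2
  · rintro u i j rfl hR
    refine ⟨e j, ?_, rfl⟩
    rw [← hlt]
    exact e.strictMono (show (show Fin (m+1) from i) < j from hR)

end Canon
section EQUIP

/-- characteristic formula of a σ-cluster-configuration -/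
noncomputable def deltaF (σ A B : Finset ℕ) : MForm ℕ :=
  .and (litF σ A) (.and ((litF σ B).dia) (.box (morF (litF σ A) (litF σ B))))

lemma sig_deltaF {σ A B : Finset ℕ} : (deltaF σ A B).sig ⊆ σ := by
  simp only [deltaF, MForm.sig, MForm.dia, sig_morF, Finset.union_subset_iff]
  exact ⟨sig_litF, sig_litF, sig_litF, sig_litF⟩

lemma sat_deltaF {F V w} {σ A B : Finset ℕ} :
    sat F V w (deltaF σ A B) ↔
      agreeV σ (V w) A ∧ (∃ v, F.R w v ∧ agreeV σ (V v) B) ∧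
        (∀ v, F.R w v → agreeV σ (V v) A ∨ agreeV σ (V v) B) := by
  simp only [deltaF, sat_and, sat_dia, sat_box, sat_litF, sat_morF]

/-- index compression map -/
def gMap (m k : ℕ) (i : Fin (k+1)) : Fin (m+1) := ⟨min i.val m, by omega⟩

lemma gMap_zero {m k : ℕ} : gMap m k 0 = 0 := by
  simp [gMap]

lemma gMap_surj {m k : ℕ} (h : m ≤ k) : ∀ j : Fin (m+1), ∃ i : Fin (k+1), gMap m k i = j := by
  intro j
  refine ⟨⟨j.val, by omega⟩, ?_⟩
  simp only [gMap]
  ext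
  simp only
  omega

/-- the matching of σ-values between two cluster models with the same configuration -/
lemma eq_match {σ A B : Finset ℕ} (hA : A ⊆ σ) (hB : B ⊆ σ) {mM mN : ℕ}
    (hmM : mM ≤ 1) (hmN : mN ≤ 1)
    (VM : Fin (mM+1) → ℕ → Prop) (VN : Fin (mN+1) → ℕ → Prop)
    (hM0 : agreeV σ (VM 0) A) (hMB : ∃ i, agreeV σ (VM i) B)
    (hMall : ∀ i, agreeV σ (VM i) A ∨ agreeV σ (VM i) B)
    (hN0 : agreeV σ (VN 0) A) (hNB : ∃ i, agreeV σ (VN i) B)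
    (hNall : ∀ i, agreeV σ (VN i) A ∨ agreeV σ (VN i) B) :
    ∀ i : Fin (max mM mN + 1), ∀ p ∈ σ,
      (VM (gMap mM _ i) p ↔ VN (gMap mN _ i) p) := by
  have hone : ∀ (m : ℕ) (V : Fin (m+1) → ℕ → Prop), m = 0 → agreeV σ (V 0) A →
      (∃ i, agreeV σ (V i) B) → A = B := by
    rintro m V rfl h0 ⟨i, hi⟩
    have : i = 0 := Fin.ext (by omega)
    subst this
    exact agreeV_unique hA hB h0 hi
  by_cases hAB : A = B
  · subst hAB
    have hMA : ∀ j, agreeV σ (VM j) A := fun j => (hMall j).elim id id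
    have hNA : ∀ j, agreeV σ (VN j) A := fun j => (hNall j).elim id id
    intro i p hp
    rw [hMA _ p hp, hNA _ p hp]
  · have hMm : mM = 1 := by
      rcases Nat.lt_or_ge mM 1 with h | h
      · exact absurd (hone mM VM (by omega) hM0 hMB) hAB
      · omega
    have hNm : mN = 1 := by
      rcases Nat.lt_or_ge mN 1 with h | h
      · exact absurd (hone mN VN (by omega) hN0 hNB) hAB
      · omega
    subst hMm; subst hNm
    have hside : ∀ (V : Fin 2 → ℕ → Prop), agreeV σ (V 0) A →
        (∃ i, agreeV σ (V i) B) → (∀ i, agreeV σ (V i) A ∨ agreeV σ (V i) B) →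
        ∀ j : Fin 2, agreeV σ (V j) (if j.val = 0 then A else B) := by
      rintro V h0 ⟨i0, hi0⟩ hall j
      by_cases hj : j.val = 0
      · have : j = 0 := Fin.ext hj
        subst this
        simpa [hj] using h0
      · simp only [hj, if_false]
        rcases hall j with h | h
        · exfalso
          by_cases h0' : i0.val = 0
          · have : i0 = 0 := Fin.ext h0'
            subst this
            exact hAB (agreeV_unique hA hB h0 hi0)
          · have hij : i0 = j := Fin.ext (by omega)
            subst hij
            exact hAB (agreeV_unique hA hB h hi0)
        · exact h
    intro i p hp
    rw [(hside VM hM0 hMB hMall _) p hp, (hside VN hN0 hNB hNall _) p hp]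

end EQUIP
section EQMain

lemma cfF_equiv {k : ℕ} : Equivalence (cfF k).R :=
  ⟨fun _ => trivial, fun _ => trivial, fun _ _ => trivial⟩

lemma cfF_finite {k : ℕ} : Finite (cfF k).W := by
  show Finite (Fin (k+1)); infer_instance

lemma cfF_card {k : ℕ} : Nat.card (cfF k).W = k + 1 := by
  show Nat.card (Fin (k+1)) = k + 1
  simp

/-- bisimulation between a big canonical cluster and a compressed one -/
lemma cf_bisim {k m : ℕ} (hmk : m ≤ k) (VP : Fin (k+1) → ℕ → Prop)
    (VV : Fin (m+1) → ℕ → Prop) (τ : Finset ℕ)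
    (hatom : ∀ i, ∀ p ∈ τ, (VP i p ↔ VV (gMap m k i) p)) :
    ∀ θ : MForm ℕ, θ.sig ⊆ τ →
      (sat (cfF k) VP ((0 : Fin (k+1)) : (cfF k).W) θ ↔
       sat (cfF m) VV ((0 : Fin (m+1)) : (cfF m).W) θ) := by
  intro θ hθ
  refine sat_of_bisim (F₁ := cfF k) (F₂ := cfF m) τ
    (fun i j => gMap m k i = j) ?_ ?_ ?_ θ hθ _ _ gMap_zero
  · rintro i j rfl p hp
    exact hatom i p hp
  · rintro i j v rfl _
    exact ⟨gMap m k v, trivial, rfl⟩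
  · rintro i j j' rfl _
    obtain ⟨i', hi'⟩ := gMap_surj hmk j'
    exact ⟨i', trivial, hi'⟩

lemma eqUIP (n : ℕ) (h1 : 1 ≤ n) (h2 : n ≤ 2) : HasUIP (EQlog n) := by
  classical
  intro φ σ hσφ
  set good : Finset ℕ × Finset ℕ → Prop := fun AB =>
    ∃ m, m + 1 ≤ n ∧ ∃ VN : Fin (m+1) → ℕ → Prop,
      sat (cfF m) VN ((0 : Fin (m+1)) : (cfF m).W) φ ∧ agreeV σ (VN 0) AB.1 ∧
      (∃ i, agreeV σ (VN i) AB.2) ∧ (∀ i, agreeV σ (VN i) AB.1 ∨ agreeV σ (VN i) AB.2)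
    with hgood
  set lst := ((σ.powerset ×ˢ σ.powerset).toList.filter (fun AB => decide (good AB))).map
    (fun AB => deltaF σ AB.1 AB.2) with hlst
  refine ⟨bigOr lst, ?_, ?_, ?_⟩
  · refine sig_bigOr_subset ?_
    intro θ hθ
    rw [hlst] at hθ
    simp only [List.mem_map] at hθ
    obtain ⟨AB, _, rfl⟩ := hθ
    exact sig_deltaF
  · -- φ.imp χ is valid
    intro F hE hf hcard w V
    rw [sat_imp]
    intro hφ
    obtain ⟨m, hm, V', hiff⟩ := eq_canon hE hf w V
    have hmn : m + 1 ≤ n := le_trans hm hcard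
    have hm1 : m ≤ 1 := by omega
    have hφ' := (hiff φ).mp hφ
    set A := σ.filter (fun p => V' 0 p) with hA
    set B := σ.filter (fun p => V' ⟨m, by omega⟩ p) with hB
    have hagA : agreeV σ (V' 0) A := by intro p hp; simp [hA, hp]
    have hagB : agreeV σ (V' ⟨m, by omega⟩) B := by intro p hp; simp [hB, hp]
    have hall : ∀ i : Fin (m+1), agreeV σ (V' i) A ∨ agreeV σ (V' i) B := by
      intro i
      by_cases hi : i.val = 0
      · left
        have : i = 0 := Fin.ext hi
        subst this
        exact hagA
      · right
        have : i = ⟨m, by omega⟩ := Fin.ext (by have := i.isLt; simp only; omega)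
        subst this
        exact hagB
    have hgoodAB : good (A, B) := ⟨m, hmn, V', hφ', hagA, ⟨_, hagB⟩, hall⟩
    have hsatδ : sat (cfF m) V' ((0 : Fin (m+1)) : (cfF m).W) (deltaF σ A B) := by
      rw [sat_deltaF]
      exact ⟨hagA, ⟨⟨m, by omega⟩, trivial, hagB⟩, fun v _ => hall v⟩
    refine (sat_bigOr).mpr ⟨deltaF σ A B, ?_, (hiff _).mpr hsatδ⟩
    rw [hlst]
    refine List.mem_map.mpr ⟨(A, B), List.mem_filter.mpr ⟨?_, by simp [hgoodAB]⟩, rfl⟩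
    rw [Finset.mem_toList]
    exact Finset.mem_product.mpr ⟨Finset.mem_powerset.mpr (Finset.filter_subset _ _),
      Finset.mem_powerset.mpr (Finset.filter_subset _ _)⟩
  · -- the uniform interpolation condition
    intro ψ hψσ hφψ
    intro F hE hf hcard w V
    rw [sat_imp]
    intro hχ
    obtain ⟨mM, hmM, VM, hiffM⟩ := eq_canon hE hf w V
    have hmMn : mM + 1 ≤ n := le_trans hmM hcard
    have hχ' := (hiffM _).mp hχ
    obtain ⟨θ, hθmem, hθsat⟩ := sat_bigOr.mp hχ'
    rw [hlst] at hθmem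
    obtain ⟨AB, hABmem, rfl⟩ := List.mem_map.mp hθmem
    obtain ⟨hABprod, hABgood⟩ := List.mem_filter.mp hABmem
    rw [Finset.mem_toList] at hABprod
    obtain ⟨hA', hB'⟩ := Finset.mem_product.mp hABprod
    rw [Finset.mem_powerset] at hA' hB'
    have hgoodAB : good AB := of_decide_eq_true hABgood
    obtain ⟨mN, hmNn, VN, hNφ, hN0, hNB, hNall⟩ := hgoodAB
    rw [sat_deltaF] at hθsat
    obtain ⟨hM0, ⟨v, _, hMBv⟩, hMall'⟩ := hθsat
    have hMall : ∀ i, agreeV σ (VM i) AB.1 ∨ agreeV σ (VM i) AB.2 :=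
      fun i => hMall' i trivial
    set k := max mM mN with hk
    set VP : Fin (k+1) → ℕ → Prop := fun i p =>
      if p ∈ MForm.sig φ then VN (gMap mN k i) p else VM (gMap mM k i) p with hVP
    have hkn : k + 1 ≤ n := by omega
    have hPφ : sat (cfF k) VP ((0 : Fin (k+1)) : (cfF k).W) φ := by
      refine (cf_bisim (le_max_right mM mN) VP VN φ.sig ?_ φ (le_refl _)).mpr hNφ
      intro i p hp
      simp [hVP, hp]
      exact Iff.rfl
    have hmatch := eq_match hA' hB' (by omega) (by omega) VM VN hM0 ⟨v, hMBv⟩ hMall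
      hN0 hNB hNall
    have hPψiff : sat (cfF k) VP ((0 : Fin (k+1)) : (cfF k).W) ψ ↔
        sat (cfF mM) VM ((0 : Fin (mM+1)) : (cfF mM).W) ψ := by
      refine cf_bisim (le_max_left mM mN) VP VM ψ.sig ?_ ψ (le_refl _)
      intro i p hp
      by_cases hpφ : p ∈ MForm.sig φ
      · have hpσ : p ∈ σ := hψσ (Finset.mem_inter.mpr ⟨hp, hpφ⟩)
        simp only [hVP, hpφ, if_true]
        exact (hmatch i p hpσ).symm
      · simp [hVP, hpφ]
        exact Iff.rfl
    have hPψ : sat (cfF k) VP ((0 : Fin (k+1)) : (cfF k).W) ψ := by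
      have := hφψ (cfF k) cfF_equiv cfF_finite (by rw [cfF_card]; exact hkn)
        ((0 : Fin (k+1)) : (cfF k).W) VP
      rw [sat_imp] at this
      exact this hPφ
    exact (hiffM ψ).mpr (hPψiff.mp hPψ)

end EQMain
section LOUIP

lemma sat_diaIter_top {m j : ℕ} {V : (loF m).W → ℕ → Prop} {i : Fin (m+1)} :
    sat (loF m) V (i : (loF m).W) (diaIter j .top) ↔ i.val + j < m + 1 := by
  induction j generalizing i with
  | zero =>
      simp only [diaIter, Nat.add_zero]
      simpa [sat_top] using i.isLt
  | succ j ih =>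
      show sat (loF m) V (i : (loF m).W) ((diaIter j .top).dia) ↔ _
      rw [sat_dia]
      constructor
      · rintro ⟨v, hR, hs⟩
        have h1 : i < v := hR
        have h2 := ih.mp hs
        have := Fin.lt_def.mp h1
        omega
      · intro h
        refine ⟨⟨i.val + 1, by omega⟩, ?_, ?_⟩
        · show i < (⟨i.val + 1, by omega⟩ : Fin (m+1))
          rw [Fin.lt_def]
          simp
        · rw [ih]
          simp only
          omega

/-- the characteristic formula of a σ-word -/
noncomputable def charW (σ : Finset ℕ) (w : List (Finset ℕ)) : MForm ℕ :=
  bigAnd ([diaIter (w.length - 1) .top, .neg (diaIter w.length .top),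
      litF σ (w.getD 0 ∅)] ++
    (List.range (w.length - 1)).map (fun j' =>
      (bigAnd [litF σ (w.getD (j'+1) ∅), diaIter (w.length - 1 - (j'+1)) .top,
        .neg (diaIter (w.length - (j'+1)) .top)]).dia))

lemma sig_charW {σ : Finset ℕ} {w : List (Finset ℕ)} : (charW σ w).sig ⊆ σ := by
  refine sig_bigAnd_subset ?_
  intro θ hθ
  simp only [List.mem_append, List.mem_cons, List.mem_map, List.mem_range,
    List.not_mem_nil, or_false] at hθ
  rcases hθ with (rfl | rfl | rfl) | ⟨j', _, rfl⟩
  · rw [sig_diaIter]; simp [MForm.sig]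
  · show (diaIter w.length MForm.top).sig ⊆ σ
    rw [sig_diaIter]; simp [MForm.sig]
  · exact sig_litF
  · show (bigAnd _).sig ⊆ σ
    refine sig_bigAnd_subset ?_
    intro θ hθ
    simp only [List.mem_cons, List.not_mem_nil, or_false] at hθ
    rcases hθ with rfl | rfl | rfl
    · exact sig_litF
    · rw [sig_diaIter]; simp [MForm.sig]
    · show (diaIter _ MForm.top).sig ⊆ σ
      rw [sig_diaIter]; simp [MForm.sig]

lemma charW_correct {σ : Finset ℕ} {m k : ℕ} {V : (loF m).W → ℕ → Prop}
    {w : List (Finset ℕ)} (hw : w.length = k + 1) :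
    sat (loF m) V ((0 : Fin (m+1)) : (loF m).W) (charW σ w) ↔
      (m = k ∧ ∀ j : Fin (m+1), agreeV σ (V j) (w.getD j.val ∅)) := by
  rw [charW, sat_bigAnd]
  constructor
  · intro h
    have h1 := h (diaIter (w.length - 1) .top) (by simp)
    have h2 := h (.neg (diaIter w.length .top)) (by simp)
    have h3 := h (litF σ (w.getD 0 ∅)) (by simp)
    rw [hw] at h1 h2
    simp only [Nat.add_sub_cancel] at h1
    have hk : (0 : Fin (m+1)).val + k < m + 1 := sat_diaIter_top.mp h1
    have hk' : ¬ ((0 : Fin (m+1)).val + (k+1) < m + 1) := fun hc => h2 (sat_diaIter_top.mpr hc)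
    have hmk : m = k := by simp at hk hk'; omega
    subst hmk
    refine ⟨rfl, ?_⟩
    intro j
    by_cases hj : j.val = 0
    · have : j = 0 := Fin.ext hj
      subst this
      rw [hj]
      exact sat_litF.mp h3
    · obtain ⟨j', hj'⟩ : ∃ j', j.val = j' + 1 := ⟨j.val - 1, by omega⟩
      have hj'lt : j' < w.length - 1 := by have := j.isLt; omega
      have h4 := h ((bigAnd [litF σ (w.getD (j'+1) ∅), diaIter (w.length - 1 - (j'+1)) .top,
          .neg (diaIter (w.length - (j'+1)) .top)]).dia) (by
        simp only [List.mem_append, List.mem_map, List.mem_range]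
        exact Or.inr ⟨j', hj'lt, rfl⟩)
      rw [sat_dia] at h4
      obtain ⟨v, hR, hs⟩ := h4
      rw [sat_bigAnd] at hs
      have hlit := hs (litF σ (w.getD (j'+1) ∅)) (by simp)
      have hd1 := hs (diaIter (w.length - 1 - (j'+1)) .top) (by simp)
      have hd2 := hs (.neg (diaIter (w.length - (j'+1)) .top)) (by simp)
      rw [hw] at hd1 hd2
      simp only [Nat.add_sub_cancel] at hd1
      have e1 : v.val + (m - (j'+1)) < m + 1 := sat_diaIter_top.mp hd1
      have e2 : ¬ (v.val + (m + 1 - (j'+1)) < m + 1) :=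
        fun hc => hd2 (sat_diaIter_top.mpr hc)
      have hvj : v = j := by
        apply Fin.ext
        have hjlt := j.isLt
        rw [hw] at hj'lt
        omega
      subst hvj
      rw [hj']
      exact sat_litF.mp hlit
  · rintro ⟨rfl, hag⟩
    intro θ hθ
    simp only [List.mem_append, List.mem_cons, List.mem_map, List.mem_range,
      List.not_mem_nil, or_false] at hθ
    rcases hθ with (rfl | rfl | rfl) | ⟨j', hj', rfl⟩
    · rw [sat_diaIter_top, hw]
      simp
    · rw [sat_neg, sat_diaIter_top, hw]
      simp
    · rw [sat_litF]
      exact hag 0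
    · rw [hw] at hj'
      simp only [Nat.add_sub_cancel] at hj'
      rw [sat_dia]
      refine ⟨(⟨j' + 1, by omega⟩ : Fin (m+1)), ?_, ?_⟩
      · show (0 : Fin (m+1)) < ⟨j' + 1, by omega⟩
        rw [Fin.lt_def]
        simp
      · rw [sat_bigAnd]
        intro θ hθ
        simp only [List.mem_cons, List.not_mem_nil, or_false] at hθ
        rcases hθ with rfl | rfl | rfl
        · rw [sat_litF]
          exact hag ⟨j' + 1, by omega⟩
        · rw [sat_diaIter_top, hw]
          simp only
          omega
        · rw [sat_neg, sat_diaIter_top, hw]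
          simp only
          omega

/-- all words of a given length with letters from the powerset of σ -/
noncomputable def wordsExact (σ : Finset ℕ) : ℕ → List (List (Finset ℕ))
  | 0 => [[]]
  | k+1 => (wordsExact σ k).flatMap (fun t => σ.powerset.toList.map (fun a => a :: t))

lemma mem_wordsExact {σ : Finset ℕ} : ∀ {k : ℕ} {w : List (Finset ℕ)},
    w ∈ wordsExact σ k ↔ (w.length = k ∧ ∀ a ∈ w, a ⊆ σ) := by
  intro k
  induction k with
  | zero =>
      intro w
      simp only [wordsExact, List.mem_singleton]
      constructor
      · rintro rfl; simp
      · rintro ⟨h, _⟩; exact List.length_eq_zero_iff.mp h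
  | succ k ih =>
      intro w
      simp only [wordsExact, List.mem_flatMap, List.mem_map, Finset.mem_toList,
        Finset.mem_powerset]
      constructor
      · rintro ⟨t, ht, a, ha, rfl⟩
        obtain ⟨hlen, hsub⟩ := ih.mp ht
        refine ⟨by simp [hlen], ?_⟩
        intro b hb
        rcases List.mem_cons.mp hb with rfl | hb
        · exact ha
        · exact hsub b hb
      · rintro ⟨hlen, hsub⟩
        rcases w with _ | ⟨a, t⟩
        · simp at hlen
        · refine ⟨t, ih.mpr ⟨by simpa using hlen, fun b hb => hsub b (by simp [hb])⟩,
            a, hsub a (by simp), rfl⟩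

end LOUIP
section LOMain

lemma loF_irr {k : ℕ} : Irreflexive (loF k).R := by
  intro a h
  exact Nat.lt_irrefl _ (h : a.val < a.val)

lemma loF_trans {k : ℕ} : Transitive (loF k).R := by
  intro a b c h1 h2
  exact Nat.lt_trans (h1 : a.val < b.val) (h2 : b.val < c.val)

lemma loF_tot {k : ℕ} : ∀ a b : (loF k).W, a ≠ b → (loF k).R a b ∨ (loF k).R b a := by
  intro a b hne
  rcases Nat.lt_trichotomy a.val b.val with h | h | h
  · exact Or.inl h
  · exact absurd (Fin.ext h : (a : Fin (k+1)) = b) hne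
  · exact Or.inr h

lemma loF_finite {k : ℕ} : Finite (loF k).W := by
  show Finite (Fin (k+1)); infer_instance

lemma loF_card {k : ℕ} : Nat.card (loF k).W = k + 1 := by
  show Nat.card (Fin (k+1)) = _; simp

lemma loF_root {k : ℕ} : ∀ v : (loF k).W, v ≠ ((0 : Fin (k+1)) : (loF k).W) →
    (loF k).R ((0 : Fin (k+1)) : (loF k).W) v := by
  intro v hv
  exact Fin.pos_of_ne_zero hv

lemma lo_relabel {k : ℕ} (V1 V2 : Fin (k+1) → ℕ → Prop) (τ : Finset ℕ)
    (hatom : ∀ i : Fin (k+1), ∀ p ∈ τ, (V1 i p ↔ V2 i p)) :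
    ∀ θ : MForm ℕ, θ.sig ⊆ τ → ∀ i : Fin (k+1),
      (sat (loF k) V1 (i : (loF k).W) θ ↔ sat (loF k) V2 (i : (loF k).W) θ) := by
  intro θ hθ i
  refine sat_of_bisim (F₁ := loF k) (F₂ := loF k) τ (fun a b => a = b) ?_ ?_ ?_ θ hθ i i rfl
  · rintro a b rfl p hp
    exact hatom a p hp
  · rintro a b v rfl hR
    exact ⟨v, hR, rfl⟩
  · rintro a b v rfl hR
    exact ⟨v, hR, rfl⟩

lemma loUIP (n : ℕ) (h1 : 1 ≤ n) : HasUIP (LOlog n) := by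
  classical
  intro φ σ hσφ
  set good : List (Finset ℕ) → Prop := fun wd =>
    ∃ m, wd.length = m + 1 ∧ ∃ VN : Fin (m+1) → ℕ → Prop,
      sat (loF m) VN ((0 : Fin (m+1)) : (loF m).W) φ ∧
      ∀ j : Fin (m+1), agreeV σ (VN j) (wd.getD j.val ∅) with hgooddef
  set lst := (((List.range n).flatMap (fun k => wordsExact σ (k+1))).filter
      (fun wd => decide (good wd))).map (charW σ) with hlst
  refine ⟨bigOr lst, ?_, ?_, ?_⟩
  · refine sig_bigOr_subset ?_
    intro θ hθ
    rw [hlst] at hθ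
    simp only [List.mem_map] at hθ
    obtain ⟨wd, _, rfl⟩ := hθ
    exact sig_charW
  · intro F hIrr hTrans hTot hf hcard w hroot V
    rw [sat_imp]
    intro hφ
    obtain ⟨m, hm, V', hiff⟩ := lo_canon hIrr hTrans hTot hf w hroot V
    have hmn : m + 1 ≤ n := by rw [hm]; exact hcard
    set wd := List.ofFn (fun j : Fin (m+1) => σ.filter (fun p => V' j p)) with hwd
    have hlen : wd.length = m + 1 := by simp [hwd]
    have hget : ∀ j : Fin (m+1), wd.getD j.val ∅ = σ.filter (fun p => V' j p) := by
      intro j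
      rw [hwd, List.getD_eq_getElem _ _ (by simp [j.isLt]), List.getElem_ofFn]
    have hag : ∀ j : Fin (m+1), agreeV σ (V' j) (wd.getD j.val ∅) := by
      intro j p hp
      rw [hget j]
      simp [hp]
    have hgood : good wd := ⟨m, hlen, V', (hiff φ).mp hφ, hag⟩
    have hsat : sat (loF m) V' ((0 : Fin (m+1)) : (loF m).W) (charW σ wd) :=
      (charW_correct hlen).mpr ⟨rfl, hag⟩
    refine sat_bigOr.mpr ⟨charW σ wd, ?_, (hiff _).mpr hsat⟩
    rw [hlst]
    refine List.mem_map.mpr ⟨wd, List.mem_filter.mpr ⟨?_, by simp [hgood]⟩, rfl⟩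
    rw [List.mem_flatMap]
    refine ⟨m, List.mem_range.mpr (by omega), mem_wordsExact.mpr ⟨hlen, ?_⟩⟩
    intro a ha
    rw [hwd] at ha
    obtain ⟨j, rfl⟩ := List.mem_ofFn.mp ha
    exact Finset.filter_subset _ _
  · intro ψ hψσ hφψ F hIrr hTrans hTot hf hcard w hroot V
    rw [sat_imp]
    intro hχ
    obtain ⟨mM, hmM, VM, hiffM⟩ := lo_canon hIrr hTrans hTot hf w hroot V
    have hmMn : mM + 1 ≤ n := by rw [hmM]; exact hcard
    obtain ⟨θ, hθmem, hθsat⟩ := sat_bigOr.mp ((hiffM _).mp hχ)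
    rw [hlst] at hθmem
    obtain ⟨wd, hwdmem, rfl⟩ := List.mem_map.mp hθmem
    obtain ⟨hwdin, hwdgood⟩ := List.mem_filter.mp hwdmem
    obtain ⟨k, hkr, hwex⟩ := List.mem_flatMap.mp hwdin
    have hkn : k < n := List.mem_range.mp hkr
    obtain ⟨hlen, hsub⟩ := mem_wordsExact.mp hwex
    have hgood : good wd := of_decide_eq_true hwdgood
    obtain ⟨m', hm', VN, hNφ, hNag⟩ := hgood
    have hm'k : m' = k := by omega
    subst hm'k
    obtain ⟨hMk, hMag⟩ := (charW_correct hlen).mp hθsat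
    subst hMk
    set VP : Fin (mM+1) → ℕ → Prop := fun i p =>
      if p ∈ MForm.sig φ then VN i p else VM i p with hVP
    have hPφ : sat (loF mM) VP ((0 : Fin (mM+1)) : (loF mM).W) φ := by
      refine (lo_relabel VP VN φ.sig ?_ φ (le_refl _) 0).mpr hNφ
      intro i p hp
      simp [hVP, hp]
    have hPψ : sat (loF mM) VP ((0 : Fin (mM+1)) : (loF mM).W) ψ := by
      have := hφψ (loF mM) loF_irr loF_trans loF_tot loF_finite
        (by rw [loF_card]; omega) ((0 : Fin (mM+1)) : (loF mM).W) loF_root VP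
      rw [sat_imp] at this
      exact this hPφ
    have hMψ : sat (loF mM) VM ((0 : Fin (mM+1)) : (loF mM).W) ψ := by
      refine (lo_relabel VP VM ψ.sig ?_ ψ (le_refl _) 0).mp hPψ
      intro i p hp
      by_cases hpφ : p ∈ MForm.sig φ
      · have hpσ : p ∈ σ := hψσ (Finset.mem_inter.mpr ⟨hp, hpφ⟩)
        simp only [hVP, hpφ, if_true]
        rw [hNag i p hpσ, hMag i p hpσ]
      · simp [hVP, hpφ]
    exact (hiffM ψ).mpr hMψ

end LOMain
section NoCIP

def phiC (n : ℕ) : MForm ℕ :=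
  .and (.neg (.atom 0)) (bigAnd ((List.range (n-1)).map (fun i =>
    ((MForm.atom 0).and ((MForm.atom (i+2)).and (bigAnd ((List.range (n-1)).map (fun j =>
      if j = i then .top else .neg (.atom (j+2))))))).dia)))

def psiC : MForm ℕ :=
  .neg ((MForm.neg (.atom 0)).and
    (((((MForm.neg (.atom 0)).and (.atom 1)).dia)).and
      (((MForm.neg (.atom 0)).and (.neg (.atom 1))).dia)))

lemma mem_sig_bigAnd {l : List (MForm ℕ)} {p : ℕ} (h : p ∈ (bigAnd l).sig) :
    ∃ θ ∈ l, p ∈ θ.sig := by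
  induction l with
  | nil => simp [bigAnd, MForm.sig] at h
  | cons a l ih =>
      simp only [bigAnd, MForm.sig, Finset.mem_union] at h
      rcases h with h | h
      · exact ⟨a, by simp, h⟩
      · obtain ⟨θ, hθ, hp⟩ := ih h
        exact ⟨θ, by simp [hθ], hp⟩

lemma sig_phiC {n p : ℕ} (h : p ∈ (phiC n).sig) : p = 0 ∨ 2 ≤ p := by
  simp only [phiC, MForm.sig, Finset.mem_union, Finset.mem_singleton] at h
  rcases h with rfl | h
  · exact Or.inl rfl
  · obtain ⟨θ, hθ, hp⟩ := mem_sig_bigAnd h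
    simp only [List.mem_map, List.mem_range] at hθ
    obtain ⟨i, _, rfl⟩ := hθ
    simp only [MForm.dia, MForm.sig, Finset.mem_union, Finset.mem_singleton] at hp
    rcases hp with rfl | rfl | hp
    · exact Or.inl rfl
    · right; omega
    · obtain ⟨θ, hθ, hp⟩ := mem_sig_bigAnd hp
      simp only [List.mem_map, List.mem_range] at hθ
      obtain ⟨j, _, rfl⟩ := hθ
      by_cases hji : j = i
      · simp [hji, MForm.sig] at hp
      · simp only [hji, if_false, MForm.sig, Finset.mem_singleton] at hp
        right; omega

lemma sig_psiC {p : ℕ} (h : p ∈ psiC.sig) : p = 0 ∨ p = 1 := by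
  simp only [psiC, MForm.dia, MForm.sig, Finset.mem_union, Finset.mem_singleton] at h
  tauto

/-- validity of the implication -/
lemma phiC_imp_psiC (n : ℕ) (hn : 3 ≤ n) : (phiC n).imp psiC ∈ EQlog n := by
  intro F hE hf hcard w V
  haveI : Finite F.W := hf
  rw [sat_imp]
  intro hφ
  by_contra hψ
  obtain ⟨hq0, hab⟩ := not_not.mp hψ
  obtain ⟨hda, hdb⟩ := hab
  obtain ⟨a, haR, haq, has⟩ := sat_dia.mp hda
  obtain ⟨b, hbR, hbq, hbs⟩ := sat_dia.mp hdb
  obtain ⟨_, hconj⟩ := hφ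
  rw [sat_bigAnd] at hconj
  have hx : ∀ i : Fin (n-1), ∃ x, F.R w x ∧ V x 0 ∧ V x (i.val+2) ∧
      (∀ j, j < n - 1 → j ≠ i.val → ¬ V x (j+2)) := by
    intro i
    have hmem := hconj _ (List.mem_map.mpr ⟨i.val, List.mem_range.mpr i.isLt, rfl⟩)
    obtain ⟨x, hxR, hx1, hx2, hx3⟩ := sat_dia.mp hmem
    refine ⟨x, hxR, hx1, hx2, ?_⟩
    intro j hj hji
    have := sat_bigAnd.mp hx3 (.neg (.atom (j+2)))
      (List.mem_map.mpr ⟨j, List.mem_range.mpr hj, by simp [hji]⟩)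
    exact this
  choose x hxR hx0 hxi hxnot using hx
  haveI : Fintype F.W := Fintype.ofFinite _
  have hxinj : Function.Injective x := by
    intro i1 i2 heq
    by_contra hne
    have h1 := hxi i1
    rw [heq] at h1
    exact hxnot i2 i1.val i1.isLt (fun hc => hne (Fin.ext hc)) h1
  have haneb : a ≠ b := by
    intro hc
    rw [hc] at has
    exact hbs has
  have hax : ∀ i, a ≠ x i := by
    intro i hc
    apply haq
    rw [hc]
    exact hx0 i
  have hbx : ∀ i, b ≠ x i := by
    intro i hc
    apply hbq
    rw [hc]
    exact hx0 i
  set T : Finset F.W := insert a (insert b (Finset.image x Finset.univ)) with hT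
  have hcardT : T.card = n + 1 := by
    rw [hT, Finset.card_insert_of_notMem, Finset.card_insert_of_notMem,
      Finset.card_image_of_injective _ hxinj]
    · simp only [Finset.card_univ, Fintype.card_fin]
      omega
    · simp only [Finset.mem_image, Finset.mem_univ, true_and, not_exists]
      intro i hc
      exact hbx i hc.symm
    · simp only [Finset.mem_insert, Finset.mem_image, Finset.mem_univ, true_and, not_exists,
        not_or]
      refine ⟨haneb, fun i hc => hax i hc.symm⟩
  have hle : n + 1 ≤ Nat.card F.W := by
    rw [Nat.card_eq_fintype_card, ← hcardT]
    exact Finset.card_le_univ T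
  omega

end NoCIP
section NoCIP2

def V1m (n' : ℕ) : Fin (n'+1) → ℕ → Prop :=
  fun i p => (p = 0 ∧ i.val ≠ 0) ∨ (2 ≤ p ∧ i.val = p - 1)

def V2m : Fin 3 → ℕ → Prop := fun i p => (p = 0 ∧ i.val = 2) ∨ (p = 1 ∧ i.val = 0)

lemma eqNoCIP (n : ℕ) (hn : 3 ≤ n) : ¬ HasCIP (EQlog n) := by
  intro hCIP
  obtain ⟨χ, hφχ, hχψ, hsig⟩ := hCIP _ _ (phiC_imp_psiC n hn)
  have hsig0 : ∀ p ∈ χ.sig, p = 0 := by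
    intro p hp
    have h' := hsig hp
    rw [Finset.mem_inter] at h'
    rcases sig_psiC h'.2 with h | h
    · exact h
    · rcases sig_phiC h'.1 with h'' | h'' <;> omega
  obtain ⟨n', hn'⟩ : ∃ n', n = n' + 1 := ⟨n - 1, by omega⟩
  subst hn'
  -- model 1 satisfies phiC
  have hM1φ : sat (cfF n') (V1m n') ((0 : Fin (n'+1)) : (cfF n').W) (phiC (n'+1)) := by
    refine ⟨?_, ?_⟩
    · show ¬ V1m n' 0 0
      simp [V1m]
    · rw [sat_bigAnd]
      intro θ hθ
      simp only [List.mem_map, List.mem_range, Nat.add_sub_cancel] at hθ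
      obtain ⟨i, hi, rfl⟩ := hθ
      rw [sat_dia]
      refine ⟨(⟨i+1, by omega⟩ : Fin (n'+1)), trivial, ?_, ?_, ?_⟩
      · show V1m n' ⟨i+1, by omega⟩ 0
        simp [V1m]
      · show V1m n' ⟨i+1, by omega⟩ (i+2)
        exact Or.inr ⟨by omega, by simp⟩
      · rw [sat_bigAnd]
        intro θ hθ
        simp only [List.mem_map, List.mem_range, Nat.add_sub_cancel] at hθ
        obtain ⟨j, hj, rfl⟩ := hθ
        by_cases hji : j = i
        · simp [hji, sat]
        · simp only [hji, if_false]
          show ¬ V1m n' ⟨i+1, by omega⟩ (j+2)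
          rintro (⟨h1, _⟩ | ⟨_, h2⟩)
          · omega
          · simp only at h2
            omega
  -- model 2 satisfies the negation of psiC
  have hM2Γ : sat (cfF 2) V2m ((0 : Fin 3) : (cfF 2).W)
      ((MForm.neg (.atom 0)).and
        (((((MForm.neg (.atom 0)).and (.atom 1)).dia)).and
          (((MForm.neg (.atom 0)).and (.neg (.atom 1))).dia))) := by
    refine ⟨?_, ?_, ?_⟩
    · show ¬ V2m 0 0
      simp [V2m]
    · rw [sat_dia]
      refine ⟨(0 : Fin 3), trivial, ?_, ?_⟩
      · show ¬ V2m 0 0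
        simp [V2m]
      · show V2m 0 1
        simp [V2m]
    · rw [sat_dia]
      refine ⟨(⟨1, by omega⟩ : Fin 3), trivial, ?_, ?_⟩
      · show ¬ V2m ⟨1, by omega⟩ 0
        simp [V2m]
      · show ¬ V2m ⟨1, by omega⟩ 1
        simp [V2m]
  -- χ holds at model 1
  have hχ1 : sat (cfF n') (V1m n') ((0 : Fin (n'+1)) : (cfF n').W) χ := by
    have := hφχ (cfF n') cfF_equiv cfF_finite (by rw [cfF_card])
      ((0 : Fin (n'+1)) : (cfF n').W) (V1m n')
    rw [sat_imp] at this
    exact this hM1φ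
  -- χ transfers to model 2 by bisimulation
  have hχ2 : sat (cfF 2) V2m ((0 : Fin 3) : (cfF 2).W) χ := by
    refine (sat_of_bisim (F₁ := cfF n') (F₂ := cfF 2) χ.sig
      (fun i j => (i.val ≠ 0 ↔ j.val = 2)) ?_ ?_ ?_ χ (le_refl _) _ _ ?_).mp hχ1
    · intro i j hZ p hp
      have hp0 : p = 0 := hsig0 p hp
      subst hp0
      show V1m n' i 0 ↔ V2m j 0
      simp only [V1m, V2m]
      constructor
      · rintro (⟨_, h⟩ | ⟨h, _⟩)
        · exact Or.inl ⟨trivial, hZ.mp h⟩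
        · omega
      · rintro (⟨_, h⟩ | ⟨h, _⟩)
        · exact Or.inl ⟨trivial, hZ.mpr h⟩
        · omega
    · intro i j v1 hZ _
      by_cases hv : v1.val = 0
      · exact ⟨(0 : Fin 3), trivial, by simp [hv]⟩
      · refine ⟨(⟨2, by omega⟩ : Fin 3), trivial, by simp [hv]⟩
    · intro i j v2 hZ _
      by_cases hv : v2.val = 2
      · refine ⟨(⟨1, by omega⟩ : Fin (n'+1)), trivial, by simp [hv]⟩
      · exact ⟨(0 : Fin (n'+1)), trivial, by simp [hv]⟩
    · simp
  -- ψ holds at model 2: contradiction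
  have hψ2 : sat (cfF 2) V2m ((0 : Fin 3) : (cfF 2).W) psiC := by
    have := hχψ (cfF 2) cfF_equiv cfF_finite (by rw [cfF_card]; omega)
      ((0 : Fin 3) : (cfF 2).W) V2m
    rw [sat_imp] at this
    exact this hχ2
  exact hψ2 hM2Γ

end NoCIP2
/-- EQ₁ and EQ₂ have UIP, EQ_n for `n ≥ 3` lacks CIP, and LO_n for `n ≥ 1`
has UIP. -/
theorem stmt18 :
    HasUIP (EQlog 1) ∧ HasUIP (EQlog 2) ∧
    (∀ n : ℕ, 3 ≤ n → ¬ HasCIP (EQlog n)) ∧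
    (∀ n : ℕ, 1 ≤ n → HasUIP (LOlog n)) := by
  exact ⟨eqUIP 1 (by omega) (by omega), eqUIP 2 (by omega) (by omega),
    fun n hn => eqNoCIP n hn, fun n hn => loUIP n hn⟩
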